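/- arXiv:2309.09034 — 2 statements merged into one kernel-verified Lean document; each statement's English description precedes it below -/
import Mathlib

section
/- (Functional Representation Lemma) For any pair of random variables (X, Y) with X supported on a finite alphabet 𝒳 and Y on a finite alphabet 𝒴, there exists a random variable U (on a possibly enlarged probability space) such that U is independent of X, Y is a deterministic function of (U, X) (i.e., H(Y | U, X) = 0), and the alphabet of U can be taken of size at most |𝒳|(|𝒴| − 1) + 1. -/
open scoped BigOperators Classical

noncomputable section

/-- Probability of an event under a pmf `p` on a finite sample space. -/
def prE {Ω : Type*} [Fintype Ω] (p : Ω → ℝ) (E : Ω → Prop) : ℝ :=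
  ∑ ω, if E ω then p ω else 0

/-- `p` is a probability mass function. -/
def IsPMF {Ω : Type*} [Fintype Ω] (p : Ω → ℝ) : Prop :=
  (∀ ω, 0 ≤ p ω) ∧ ∑ ω, p ω = 1

/-- P(X = a). -/
def pr {Ω α : Type*} [Fintype Ω] (p : Ω → ℝ) (X : Ω → α) (a : α) : ℝ :=
  prE p (fun ω => X ω = a)

/-- Shannon entropy in bits. -/
def ent {Ω α : Type*} [Fintype Ω] [Fintype α] (p : Ω → ℝ) (X : Ω → α) : ℝ :=
  -∑ a, pr p X a * Real.logb 2 (pr p X a)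

/-- Conditional entropy H(Y | X) = H(X,Y) - H(X). -/
def condEnt {Ω α β : Type*} [Fintype Ω] [Fintype α] [Fintype β]
    (p : Ω → ℝ) (Y : Ω → β) (X : Ω → α) : ℝ :=
  ent p (fun ω => (X ω, Y ω)) - ent p X

/-- Mutual information I(X; Y). -/
def mi {Ω α β : Type*} [Fintype Ω] [Fintype α] [Fintype β]
    (p : Ω → ℝ) (X : Ω → α) (Y : Ω → β) : ℝ :=
  ent p X + ent p Y - ent p (fun ω => (X ω, Y ω))

/-- Conditional mutual information I(X; Y | Z). -/
def cmi {Ω α β γ : Type*} [Fintype Ω] [Fintype α] [Fintype β] [Fintype γ]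
    (p : Ω → ℝ) (X : Ω → α) (Y : Ω → β) (Z : Ω → γ) : ℝ :=
  ent p (fun ω => (X ω, Z ω)) + ent p (fun ω => (Y ω, Z ω))
    - ent p (fun ω => (X ω, Y ω, Z ω)) - ent p Z

/-- Independence of two random variables. -/
def IndepRV {Ω α β : Type*} [Fintype Ω] (p : Ω → ℝ) (X : Ω → α) (Y : Ω → β) : Prop :=
  ∀ a b, prE p (fun ω => X ω = a ∧ Y ω = b) = pr p X a * pr p Y b

/-- X is uniformly distributed on its (finite) alphabet. -/
def IsUniform {Ω α : Type*} [Fintype Ω] [Fintype α] (p : Ω → ℝ) (X : Ω → α) : Prop :=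
  ∀ a, pr p X a = 1 / (Fintype.card α : ℝ)

/-- Entropy of Y conditioned on the event E (e.g. {X = x}). -/
def entCondOn {Ω β : Type*} [Fintype Ω] [Fintype β] (p : Ω → ℝ) (Y : Ω → β)
    (E : Ω → Prop) : ℝ :=
  -∑ b, (prE p (fun ω => Y ω = b ∧ E ω) / prE p E) *
      Real.logb 2 (prE p (fun ω => Y ω = b ∧ E ω) / prE p E)

/-- PMF conditioned on the event E. -/
def pCond {Ω : Type*} [Fintype Ω] (p : Ω → ℝ) (E : Ω → Prop) (ω : Ω) : ℝ :=
  if E ω then p ω / prE p E else 0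


lemma prE_nonneg {Ω : Type*} [Fintype Ω] {p : Ω → ℝ} (hp : ∀ ω, 0 ≤ p ω) (E : Ω → Prop) :
    0 ≤ prE p E := by
  apply Finset.sum_nonneg; intro ω _; split <;> simp [hp ω]

lemma prE_mono {Ω : Type*} [Fintype Ω] {p : Ω → ℝ} (hp : ∀ ω, 0 ≤ p ω) {E F : Ω → Prop}
    (h : ∀ ω, E ω → F ω) : prE p E ≤ prE p F := by
  apply Finset.sum_le_sum; intro ω _
  by_cases hE : E ω
  · rw [if_pos hE, if_pos (h ω hE)]
  · rw [if_neg hE]; split <;> simp [hp ω]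

lemma prE_congr {Ω : Type*} [Fintype Ω] (p : Ω → ℝ) {E F : Ω → Prop}
    (h : ∀ ω, E ω ↔ F ω) : prE p E = prE p F := by
  unfold prE
  apply Finset.sum_congr rfl
  intro ω _
  by_cases hE : E ω
  · rw [if_pos hE, if_pos ((h ω).1 hE)]
  · rw [if_neg hE, if_neg (fun hF => hE ((h ω).2 hF))]

lemma ent_comp {Ω γ β : Type*} [Fintype Ω] [Fintype γ] [Fintype β] (p : Ω → ℝ)
    (Z : Ω → γ) (g : γ → β) :
    ent p (fun ω => (Z ω, g (Z ω))) = ent p Z := by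
  unfold ent
  congr 1
  rw [Fintype.sum_prod_type]
  apply Finset.sum_congr rfl
  intro a _
  rw [Finset.sum_eq_single (g a)]
  · have : pr p (fun ω => (Z ω, g (Z ω))) (a, g a) = pr p Z a := by
      apply prE_congr
      intro ω
      constructor
      · intro h; exact congrArg Prod.fst h
      · intro h; exact congrArg (fun z => (z, g z)) h
    rw [this]
  · intro b _ hb
    have : pr p (fun ω => (Z ω, g (Z ω))) (a, b) = 0 := by
      unfold pr
      rw [show prE p (fun ω => (Z ω, g (Z ω)) = (a, b)) = prE p (fun _ => False) from
        prE_congr p (fun ω => ⟨fun h => hb (by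
          obtain ⟨h1, h2⟩ := Prod.mk.injEq .. ▸ h
          rw [← h2, h1]), False.elim⟩)]
      unfold prE
      simp
    rw [this]; simp
  · intro h; exact absurd (Finset.mem_univ _) h

/-- Functional Representation Lemma: on a possibly enlarged (finite) probability
space there is U independent of X with H(Y | U, X) = 0 and
|U| ≤ |X|(|Y| - 1) + 1, with (X, Y) keeping its joint distribution. -/
theorem stmt4 {Ω α β : Type*} [Fintype Ω] [Fintype α] [Fintype β]
    (p : Ω → ℝ) (hp : IsPMF p) (X : Ω → α) (Y : Ω → β) :
    ∃ (N m : ℕ) (p' : Fin N → ℝ) (X' : Fin N → α) (Y' : Fin N → β)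
      (U : Fin N → Fin m),
      IsPMF p' ∧
      (∀ c : α × β, pr p' (fun ω => (X' ω, Y' ω)) c = pr p (fun ω => (X ω, Y ω)) c) ∧
      IndepRV p' U X' ∧
      condEnt p' Y' (fun ω => (U ω, X' ω)) = 0 ∧
      m ≤ Fintype.card α * (Fintype.card β - 1) + 1 := by
  classical
  obtain ⟨hp0, hp1⟩ := hp
  have hΩ : Nonempty Ω := by
    by_contra h
    rw [not_nonempty_iff] at h
    rw [Finset.univ_eq_empty, Finset.sum_empty] at hp1
    exact one_ne_zero hp1.symm
  obtain ⟨ω0⟩ := hΩ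
  set cβ := Fintype.card β with hcβ
  have hβ : Nonempty β := ⟨Y ω0⟩
  have hcβpos : 0 < cβ := Fintype.card_pos_iff.mpr hβ
  set e : β ≃ Fin cβ := Fintype.equivFin β with he
  set pX : α → ℝ := fun x => pr p X x with hpXdef
  set pXY : α → β → ℝ := fun x y => pr p (fun ω => (X ω, Y ω)) (x, y) with hpXYdef
  have hpX0 : ∀ x, 0 ≤ pX x := fun x => prE_nonneg hp0 _
  have hpXY0 : ∀ x y, 0 ≤ pXY x y := fun x y => prE_nonneg hp0 _
  have hrow : ∀ x, ∑ y, pXY x y = pX x := by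
    intro x
    simp only [hpXYdef, hpXdef, pr, prE]
    rw [Finset.sum_comm]
    apply Finset.sum_congr rfl
    intro ω _
    by_cases hx : X ω = x
    · rw [if_pos hx]
      rw [Finset.sum_eq_single (Y ω)]
      · rw [if_pos (by rw [hx])]
      · intro b _ hb
        exact if_neg (fun h => hb (congrArg Prod.snd h).symm)
      · intro h; exact absurd (Finset.mem_univ _) h
    · rw [if_neg hx]
      apply Finset.sum_eq_zero
      intro b _
      exact if_neg (fun h => hx (congrArg Prod.fst h))
  have hsum_pX : ∑ x, pX x = 1 := by
    simp only [hpXdef, pr, prE]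
    rw [Finset.sum_comm, ← hp1]
    apply Finset.sum_congr rfl
    intro ω _
    rw [Finset.sum_eq_single (X ω)]
    · rw [if_pos rfl]
    · intro b _ hb; rw [if_neg (fun h => hb h.symm)]
    · intro h; exact absurd (Finset.mem_univ _) h
  have hpXYle : ∀ x y, pXY x y ≤ pX x := by
    intro x y
    exact prE_mono hp0 (fun ω h => congrArg Prod.fst h)
  set r : α → β → ℝ := fun x y =>
    if 0 < pX x then pXY x y / pX x else (if y = Y ω0 then 1 else 0) with hrdef
  have hr0 : ∀ x y, 0 ≤ r x y := by
    intro x y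
    simp only [hrdef]
    split
    · exact div_nonneg (hpXY0 x y) (hpX0 x)
    · split <;> norm_num
  have hr1 : ∀ x, ∑ y, r x y = 1 := by
    intro x
    by_cases hx : 0 < pX x
    · simp only [hrdef, if_pos hx]
      rw [← Finset.sum_div, hrow, div_self (ne_of_gt hx)]
    · simp only [hrdef, if_neg hx]
      rw [Finset.sum_ite_eq' Finset.univ (Y ω0) (fun _ => (1:ℝ))]
      simp
  have hpXr : ∀ x y, pXY x y = pX x * r x y := by
    intro x y
    by_cases hx : 0 < pX x
    · simp only [hrdef, if_pos hx]
      rw [mul_div_cancel₀ _ (ne_of_gt hx)]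
    · have hx0 : pX x = 0 := le_antisymm (not_lt.mp hx) (hpX0 x)
      rw [hx0, zero_mul]
      exact le_antisymm (hx0 ▸ hpXYle x y) (hpXY0 x y)
  set rr : α → ℕ → ℝ := fun x j => if h : j < cβ then r x (e.symm ⟨j, h⟩) else 0 with hrrdef
  have hrr0 : ∀ x j, 0 ≤ rr x j := by
    intro x j
    simp only [hrrdef]
    split
    · exact hr0 _ _
    · exact le_refl 0
  set d : α → ℕ → ℝ := fun x k => ∑ j ∈ Finset.range k, rr x j with hddef
  have hd0 : ∀ x, d x 0 = 0 := by intro x; simp [hddef]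
  have hdmono : ∀ x, Monotone (d x) := by
    intro x j k hjk
    simp only [hddef]
    exact Finset.sum_le_sum_of_subset_of_nonneg (Finset.range_subset_range.mpr hjk)
      (fun i _ _ => hrr0 x i)
  have hdtop : ∀ x, d x cβ = 1 := by
    intro x
    simp only [hddef]
    rw [← Fin.sum_univ_eq_sum_range (fun j => rr x j) cβ]
    rw [show ∑ j : Fin cβ, rr x ↑j = ∑ j : Fin cβ, r x (e.symm j) from
      Finset.sum_congr rfl (fun j _ => by simp [hrrdef, j.isLt])]
    rw [Equiv.sum_comp e.symm (r x)]
    exact hr1 x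
  have hd01 : ∀ x k, k ≤ cβ → 0 ≤ d x k ∧ d x k ≤ 1 := by
    intro x k hk
    constructor
    · rw [← hd0 x]; exact hdmono x (Nat.zero_le k)
    · rw [← hdtop x]; exact hdmono x hk
  -- the breakpoint set
  set T : Finset ℝ := insert 0 (((Finset.univ : Finset (α × Fin cβ)).image
    (fun q => d q.1 (↑q.2 + 1))).filter (· < 1)) with hTdef
  have hT0 : (0:ℝ) ∈ T := Finset.mem_insert_self 0 _
  have hT01 : ∀ t ∈ T, 0 ≤ t ∧ t < 1 := by
    intro t ht
    rw [hTdef, Finset.mem_insert] at ht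
    rcases ht with h | h
    · exact ⟨le_of_eq h.symm, by rw [h]; norm_num⟩
    · rw [Finset.mem_filter] at h
      obtain ⟨h1, h2⟩ := h
      rw [Finset.mem_image] at h1
      obtain ⟨q, _, hq⟩ := h1
      refine ⟨?_, h2⟩
      rw [← hq]
      exact (hd01 q.1 (↑q.2 + 1) q.2.isLt).1
  have hdT : ∀ x k, k ≤ cβ → d x k < 1 → d x k ∈ T := by
    intro x k hk hlt
    match k with
    | 0 => rw [hd0]; exact hT0
    | (j+1) =>
      rw [hTdef]
      apply Finset.mem_insert_of_mem
      rw [Finset.mem_filter]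
      refine ⟨?_, hlt⟩
      rw [Finset.mem_image]
      exact ⟨(x, ⟨j, hk⟩), Finset.mem_univ _, rfl⟩
  set m := T.card with hmdef
  have hmpos : 0 < m := Finset.card_pos.mpr ⟨0, hT0⟩
  set L : Fin m → ℝ := fun i => ↑(T.orderIsoOfFin rfl i) with hLdef
  have hLmem : ∀ i, L i ∈ T := fun i => (T.orderIsoOfFin rfl i).2
  have hLmono : StrictMono L := fun i j hij => by
    simp only [hLdef]
    exact_mod_cast (T.orderIsoOfFin rfl).strictMono hij
  have hLlt : ∀ i j, L i < L j ↔ i < j := fun i j => hLmono.lt_iff_lt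
  have hLsurj : ∀ t ∈ T, ∃ i, L i = t := by
    intro t ht
    exact ⟨(T.orderIsoOfFin rfl).symm ⟨t, ht⟩, by
      simp only [hLdef]
      rw [OrderIso.apply_symm_apply]⟩
  have hL01 : ∀ i, 0 ≤ L i ∧ L i < 1 := fun i => hT01 _ (hLmem i)
  set g : ℕ → ℝ := fun j => if h : j < m then L ⟨j, h⟩ else 1 with hgdef
  have hg0 : g 0 = 0 := by
    obtain ⟨i0, hi0⟩ := hLsurj 0 hT0
    simp only [hgdef, dif_pos hmpos]
    refine le_antisymm ?_ (hL01 _).1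
    calc L ⟨0, hmpos⟩ ≤ L i0 := (hLmono.le_iff_le).mpr (Fin.mk_le_of_le_val (Nat.zero_le _))
    _ = 0 := hi0
  have hgm : ∀ j, m ≤ j → g j = 1 := by
    intro j hj
    simp only [hgdef, dif_neg (not_lt.mpr hj)]
  have hg_le_one : ∀ j, g j ≤ 1 := by
    intro j
    simp only [hgdef]
    split
    · exact le_of_lt (hL01 _).2
    · exact le_refl 1
  have hg_mono : Monotone g := by
    intro i j hij
    by_cases hi : i < m
    · by_cases hj : j < m
      · simp only [hgdef, dif_pos hi, dif_pos hj]
        exact (hLmono.le_iff_le).mpr hij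
      · simp only [hgdef, dif_pos hi, dif_neg hj]
        exact le_of_lt (hL01 _).2
    · have : ¬ j < m := fun h => hi (lt_of_le_of_lt hij h)
      simp only [hgdef, dif_neg hi, dif_neg this]
      exact le_refl 1
  set ν : ℕ → ℝ := fun j => g (j+1) - g j with hνdef
  have hν0 : ∀ j, 0 ≤ ν j := fun j => sub_nonneg.mpr (hg_mono (Nat.le_succ j))
  have hgL : ∀ i : Fin m, g ↑i = L i := by
    intro i
    simp only [hgdef, dif_pos i.isLt]
  -- the key prefix-measure lemma
  have hW : ∀ t : ℝ, (t ∈ T ∨ t = 1) → ∑ i : Fin m, (if L i < t then ν ↑i else 0) = t := by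
    intro t ht
    have hK : ∃ K ≤ m, (∀ i : Fin m, (L i < t ↔ ↑i < K)) ∧ g K = t := by
      rcases ht with ht | ht
      · obtain ⟨i0, hi0⟩ := hLsurj t ht
        refine ⟨↑i0, le_of_lt i0.isLt, fun i => ?_, by rw [hgL i0, hi0]⟩
        rw [← hi0, hLlt]
        exact Iff.symm Fin.lt_iff_val_lt_val |>.symm
      · refine ⟨m, le_refl m, fun i => ?_, by rw [hgm m (le_refl m), ht]⟩
        simp [ht ▸ (hL01 i).2, i.isLt]
    obtain ⟨K, hKm, hKiff, hgK⟩ := hK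
    calc ∑ i : Fin m, (if L i < t then ν ↑i else 0)
        = ∑ i : Fin m, (if (↑i < K) then ν ↑i else 0) :=
          Finset.sum_congr rfl (fun i _ => by
            by_cases h : L i < t
            · rw [if_pos h, if_pos ((hKiff i).1 h)]
            · rw [if_neg h, if_neg (fun hh => h ((hKiff i).2 hh))])
      _ = ∑ j ∈ Finset.range m, (if j < K then ν j else 0) :=
          Fin.sum_univ_eq_sum_range (fun j => if j < K then ν j else 0) m
      _ = ∑ j ∈ (Finset.range m).filter (· < K), ν j := (Finset.sum_filter _ _).symm
      _ = ∑ j ∈ Finset.range K, ν j := by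
          congr 1
          ext j
          simp only [Finset.mem_filter, Finset.mem_range]
          omega
      _ = g K - g 0 := by
          simp only [hνdef]
          exact Finset.sum_range_sub g K
      _ = t := by rw [hgK, hg0, sub_zero]
  have hsum_ν : ∑ i : Fin m, ν ↑i = 1 := by
    rw [show ∑ i : Fin m, ν ↑i = ∑ i : Fin m, (if L i < 1 then ν ↑i else 0) from
      Finset.sum_congr rfl (fun i _ => (if_pos (hL01 i).2).symm)]
    exact hW 1 (Or.inr rfl)
  -- definition of the representation function f
  have hP : ∀ (u : Fin m) (x : α), ∃ k, L u < d x (k + 1) := by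
    intro u x
    refine ⟨cβ - 1, ?_⟩
    rw [Nat.sub_add_cancel hcβpos, hdtop]
    exact (hL01 u).2
  set f0 : Fin m → α → ℕ := fun u x => Nat.find (hP u x) with hf0def
  have hf0lt : ∀ u x, f0 u x < cβ := by
    intro u x
    have h1 : f0 u x ≤ cβ - 1 := Nat.find_le (by
      rw [Nat.sub_add_cancel hcβpos, hdtop]
      exact (hL01 u).2)
    omega
  set f : Fin m → α → β := fun u x => e.symm ⟨f0 u x, hf0lt u x⟩ with hfdef
  have hf_iff : ∀ (u : Fin m) (x : α) (y : β),
      f u x = y ↔ (d x ↑(e y) ≤ L u ∧ L u < d x (↑(e y) + 1)) := by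
    intro u x y
    have h1 : f u x = y ↔ f0 u x = ↑(e y) := by
      simp only [hfdef]
      rw [Equiv.symm_apply_eq, Fin.ext_iff]
    rw [h1, hf0def, Nat.find_eq_iff]
    constructor
    · rintro ⟨h2, h3⟩
      refine ⟨?_, h2⟩
      rcases Nat.eq_zero_or_pos ↑(e y) with h0 | h0
      · rw [h0, hd0]
        exact (hL01 u).1
      · have := h3 (↑(e y) - 1) (by omega)
        rw [not_lt] at this
        rw [show (↑(e y) : ℕ) = (↑(e y) - 1) + 1 by omega]
        exact this
    · rintro ⟨h2, h3⟩
      refine ⟨h3, fun j hj => ?_⟩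
      rw [not_lt]
      calc d x (j + 1) ≤ d x ↑(e y) := hdmono x (by omega)
        _ ≤ L u := h2
  -- the key conditional probability identity
  have hq : ∀ x y, ∑ i : Fin m, (if f i x = y then ν ↑i else 0) = r x y := by
    intro x y
    have hey : (↑(e y) : ℕ) < cβ := (e y).isLt
    set a := d x ↑(e y) with hadef
    set b := d x (↑(e y) + 1) with hbdef
    have hab : a ≤ b := hdmono x (Nat.le_succ _)
    have haT : a ∈ T ∨ a = 1 := by
      rcases lt_or_eq_of_le (hd01 x ↑(e y) (le_of_lt hey)).2 with h | h
      · exact Or.inl (hdT x ↑(e y) (le_of_lt hey) h)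
      · exact Or.inr h
    have hbT : b ∈ T ∨ b = 1 := by
      rcases lt_or_eq_of_le (hd01 x (↑(e y) + 1) hey).2 with h | h
      · exact Or.inl (hdT x (↑(e y) + 1) hey h)
      · exact Or.inr h
    have key : ∀ i : Fin m, (if f i x = y then ν ↑i else 0)
        = (if L i < b then ν ↑i else 0) - (if L i < a then ν ↑i else 0) := by
      intro i
      by_cases h1 : L i < a
      · rw [if_pos (lt_of_lt_of_le h1 hab), if_pos h1,
          if_neg (fun h => absurd ((hf_iff i x y).1 h).1 (not_le.mpr h1)), sub_self]
      · by_cases h2 : L i < b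
        · rw [if_pos ((hf_iff i x y).2 ⟨not_lt.mp h1, h2⟩), if_pos h2, if_neg h1, sub_zero]
        · rw [if_neg (fun h => absurd ((hf_iff i x y).1 h).2 h2), if_neg h2, if_neg h1,
            sub_zero]
    rw [Finset.sum_congr rfl (fun i _ => key i), Finset.sum_sub_distrib,
      hW b hbT, hW a haT]
    have : b - a = rr x ↑(e y) := by
      simp only [hbdef, hadef, hddef]
      rw [Finset.sum_range_succ]
      ring
    rw [this]
    simp only [hrrdef, dif_pos hey]
    congr 1
    exact congrArg (e.symm) (Fin.ext rfl) |>.trans (e.symm_apply_apply y)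
  -- build the enlarged space
  set cα := Fintype.card α with hcα
  set eα : α ≃ Fin cα := Fintype.equivFin α with heα
  set N := m * cα with hN
  set E : Fin m × α ≃ Fin N := ((Equiv.refl (Fin m)).prodCongr eα).trans finProdFinEquiv
    with hE
  set U : Fin N → Fin m := fun ω => (E.symm ω).1 with hU
  set X' : Fin N → α := fun ω => (E.symm ω).2 with hX'
  set p' : Fin N → ℝ := fun ω => ν ↑(U ω) * pX (X' ω) with hp'
  set f2 : Fin m × α → β := fun q => f q.1 q.2 with hf2
  set Y' : Fin N → β := fun ω => f2 (U ω, X' ω) with hY'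
  have hEsymm : ∀ q : Fin m × α, E.symm (E q) = q := fun q => E.symm_apply_apply q
  have hprE2 : ∀ (Q : Fin N → Prop) (R : Fin m × α → Prop), (∀ q, Q (E q) ↔ R q) →
      prE p' Q = ∑ q : Fin m × α, (if R q then ν ↑q.1 * pX q.2 else 0) := by
    intro Q R hQR
    unfold prE
    rw [← Equiv.sum_comp E (fun ω => if Q ω then p' ω else 0)]
    apply Finset.sum_congr rfl
    intro q _
    by_cases h : R q
    · rw [if_pos ((hQR q).2 h), if_pos h]
      simp only [hp', hU, hX', hEsymm q]
    · rw [if_neg (fun hh => h ((hQR q).1 hh)), if_neg h]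
  refine ⟨N, m, p', X', Y', U, ⟨?_, ?_⟩, ?_, ?_, ?_, ?_⟩
  · -- nonneg
    intro ω
    exact mul_nonneg (hν0 _) (hpX0 _)
  · -- sums to 1
    rw [← Equiv.sum_comp E p']
    have hpt : ∀ q : Fin m × α, p' (E q) = ν ↑q.1 * pX q.2 := by
      intro q
      simp only [hp', hU, hX', hEsymm q]
    rw [Finset.sum_congr rfl (fun q (_ : q ∈ Finset.univ) => hpt q), Fintype.sum_prod_type]
    calc ∑ u : Fin m, ∑ x : α, ν ↑u * pX x
        = ∑ u : Fin m, ν ↑u * ∑ x : α, pX x := by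
          apply Finset.sum_congr rfl
          intro u _
          rw [Finset.mul_sum]
      _ = 1 := by rw [hsum_pX]; simp only [mul_one]; exact hsum_ν
  · -- joint distribution preserved
    rintro ⟨x, y⟩
    show pr p' (fun ω => (X' ω, Y' ω)) (x, y) = pXY x y
    have step1 : pr p' (fun ω => (X' ω, Y' ω)) (x, y)
        = ∑ q : Fin m × α, (if (q.2 = x ∧ f q.1 q.2 = y) then ν ↑q.1 * pX q.2 else 0) := by
      have hiff : ∀ q : Fin m × α,
          ((fun ω => (X' ω, Y' ω) = (x, y)) (E q)) ↔ (q.2 = x ∧ f q.1 q.2 = y) := by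
        intro q
        simp only [hX', hY', hU, hf2, hEsymm q]
        rw [Prod.mk.injEq]
      convert hprE2 (fun ω => (X' ω, Y' ω) = (x, y))
        (fun q => q.2 = x ∧ f q.1 q.2 = y) hiff using 3
      rfl
    rw [step1, Fintype.sum_prod_type]
    have hinner : ∀ u : Fin m,
        (∑ x' : α, if ((u, x').2 = x ∧ f (u, x').1 (u, x').2 = y)
          then ν ↑(u, x').1 * pX (u, x').2 else 0)
        = (if f u x = y then ν ↑u else 0) * pX x := by
      intro u
      rw [Finset.sum_eq_single x]
      · by_cases h : f u x = y
        · rw [if_pos ⟨rfl, h⟩, if_pos h]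
        · rw [if_neg (fun hh => h hh.2), if_neg h, zero_mul]
      · intro x' _ hx'
        rw [if_neg (fun hh => hx' hh.1)]
      · intro h; exact absurd (Finset.mem_univ _) h
    rw [Finset.sum_congr rfl (fun u (_ : u ∈ Finset.univ) => hinner u), ← Finset.sum_mul,
      hq x y, hpXr x y, mul_comm]
  · -- independence
    intro a b
    have h1 : prE p' (fun ω => U ω = a ∧ X' ω = b) = ν ↑a * pX b := by
      have step : prE p' (fun ω => U ω = a ∧ X' ω = b)
          = ∑ q : Fin m × α, (if q = (a, b) then ν ↑q.1 * pX q.2 else 0) := by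
        have hiff : ∀ q : Fin m × α,
            ((fun ω => U ω = a ∧ X' ω = b) (E q)) ↔ (q = (a, b)) := by
          intro q
          simp only [hU, hX', hEsymm q]
          rw [Prod.ext_iff]
        convert hprE2 (fun ω => U ω = a ∧ X' ω = b)
          (fun q => q = (a, b)) hiff using 3
      rw [step, Finset.sum_eq_single (a, b)]
      · rw [if_pos rfl]
      · intro q _ hquerr; rw [if_neg hquerr]
      · intro h; exact absurd (Finset.mem_univ _) h
    have h2 : pr p' U a = ν ↑a := by
      have step : pr p' U a
          = ∑ q : Fin m × α, (if q.1 = a then ν ↑q.1 * pX q.2 else 0) := by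
        have hiff : ∀ q : Fin m × α, ((fun ω => U ω = a) (E q)) ↔ (q.1 = a) := by
          intro q
          simp only [hU, hEsymm q]
        convert hprE2 (fun ω => U ω = a) (fun q => q.1 = a) hiff using 3
        rfl
      rw [step, Fintype.sum_prod_type, Finset.sum_eq_single a]
      · have hval : ∀ x : α,
            (if ((a, x) : Fin m × α).1 = a then ν ↑((a, x) : Fin m × α).1
              * pX ((a, x) : Fin m × α).2 else 0) = ν ↑a * pX x :=
          fun x => if_pos rfl
        rw [Finset.sum_congr rfl (fun x (_ : x ∈ Finset.univ) => hval x),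
          ← Finset.mul_sum, hsum_pX, mul_one]
      · intro u _ hu
        apply Finset.sum_eq_zero
        intro x _
        rw [if_neg hu]
      · intro h; exact absurd (Finset.mem_univ _) h
    have h3 : pr p' X' b = pX b := by
      have step : pr p' X' b
          = ∑ q : Fin m × α, (if q.2 = b then ν ↑q.1 * pX q.2 else 0) := by
        have hiff : ∀ q : Fin m × α, ((fun ω => X' ω = b) (E q)) ↔ (q.2 = b) := by
          intro q
          simp only [hX', hEsymm q]
        convert hprE2 (fun ω => X' ω = b) (fun q => q.2 = b) hiff using 3
        rfl
      rw [step, Fintype.sum_prod_type]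
      have hin : ∀ u : Fin m,
          (∑ x : α, if ((u, x).2 = b) then ν ↑(u, x).1 * pX (u, x).2 else 0)
          = ν ↑u * pX b := by
        intro u
        rw [Finset.sum_eq_single b]
        · rw [if_pos rfl]
        · intro x _ hx; rw [if_neg hx]
        · intro h; exact absurd (Finset.mem_univ _) h
      rw [Finset.sum_congr rfl (fun u (_ : u ∈ Finset.univ) => hin u), ← Finset.sum_mul,
        hsum_ν, one_mul]
    rw [h1, h2, h3]
  · -- H(Y' | U, X') = 0
    show condEnt p' Y' (fun ω => (U ω, X' ω)) = 0
    unfold condEnt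
    rw [sub_eq_zero]
    exact ent_comp p' (fun ω => (U ω, X' ω)) f2
  · -- cardinality bound
    have hstep1 : m ≤ (((Finset.univ : Finset (α × Fin cβ)).image
        (fun q => d q.1 (↑q.2 + 1))).filter (· < 1)).card + 1 := by
      rw [hmdef, hTdef]
      have := Finset.card_insert_le (0:ℝ) (((Finset.univ : Finset (α × Fin cβ)).image
        (fun q => d q.1 (↑q.2 + 1))).filter (· < 1))
      omega
    have hstep2 : (((Finset.univ : Finset (α × Fin cβ)).image
        (fun q => d q.1 (↑q.2 + 1))).filter (· < 1)).card
        ≤ ((Finset.univ : Finset (α × Fin cβ)).filter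
            (fun q => d q.1 (↑q.2 + 1) < 1)).card := by
      rw [Finset.filter_image]
      exact Finset.card_image_le
    have hstep3 : ((Finset.univ : Finset (α × Fin cβ)).filter
        (fun q => d q.1 (↑q.2 + 1) < 1)).card ≤ cα * (cβ - 1) := by
      have hsub : (Finset.univ : Finset (α × Fin cβ)).filter
          (fun q => d q.1 (↑q.2 + 1) < 1)
          ⊆ (Finset.univ : Finset α) ×ˢ
            ((Finset.univ : Finset (Fin cβ)).filter (fun k : Fin cβ => (k : ℕ) < cβ - 1)) := by
        intro q hq
        rw [Finset.mem_filter] at hq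
        rw [Finset.mem_product, Finset.mem_filter]
        refine ⟨Finset.mem_univ _, Finset.mem_univ _, ?_⟩
        by_contra hcon
        have hlt : (↑q.2 : ℕ) < cβ := q.2.isLt
        have h2 : (↑q.2 : ℕ) + 1 = cβ := by omega
        rw [h2, hdtop] at hq
        exact absurd hq.2 (lt_irrefl 1)
      calc ((Finset.univ : Finset (α × Fin cβ)).filter
            (fun q => d q.1 (↑q.2 + 1) < 1)).card
          ≤ _ := Finset.card_le_card hsub
        _ = cα * (cβ - 1) := by
            rw [Finset.card_product, Finset.card_univ]
            congr 1
            have hb : cβ - 1 < cβ := by omega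
            have hIio : ((Finset.univ : Finset (Fin cβ)).filter
                (fun k : Fin cβ => (k : ℕ) < cβ - 1))
                = Finset.Iio (⟨cβ - 1, hb⟩ : Fin cβ) := by
              ext k
              simp only [Finset.mem_filter, Finset.mem_univ, true_and, Finset.mem_Iio,
                Fin.lt_def]
            rw [hIio, Fin.card_Iio]
    omega
end
end

section
/- (Extended FRL / Lemma 2) Fix k ≥ 1 and let (X, Y, U_1, …, U_k) be finite discrete random variables with I(X; U_1, …, U_k) = 0. Then there exists a random variable U_{k+1} such that I(U_1, …, U_{k+1}; X) = 0, H(Y | U_1, …, U_{k+1}, X) = 0, and |𝒰_{k+1}| ≤ |𝒳| · |𝒰_1| ⋯ |𝒰_k| · (|𝒴| − 1) + 1. -/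
set_option linter.unusedSectionVars false
set_option linter.unusedVariables false
set_option maxHeartbeats 1000000


open scoped BigOperators Classical

noncomputable section

section Lemmas
variable {Ω α β γ : Type*} [Fintype Ω] {p : Ω → ℝ}

lemma sum_pr [Fintype α] (X : Ω → α) : ∑ a, pr p X a = ∑ ω, p ω := by
  unfold pr prE
  rw [Finset.sum_comm]
  refine Finset.sum_congr rfl fun ω _ => ?_
  simp

lemma pr_fst [Fintype β] (A : Ω → α) (B : Ω → β) (a : α) :
    pr p A a = ∑ b, pr p (fun ω => (A ω, B ω)) (a, b) := by
  unfold pr prE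
  rw [Finset.sum_comm]
  refine Finset.sum_congr rfl fun ω _ => ?_
  by_cases h : A ω = a <;> simp [Prod.ext_iff, h]

lemma ent_congr {Ω' : Type*} [Fintype Ω'] [Fintype α] {p' : Ω' → ℝ}
    {Z : Ω → α} {Z' : Ω' → α} (h : ∀ c, pr p Z c = pr p' Z' c) :
    ent p Z = ent p' Z' := by
  unfold ent; simp [h]

lemma pr_comp_eq [Fintype α] (Z : Ω → α) {g : α → β} (hg : Function.Injective g) (a : α) :
    pr p (fun ω => g (Z ω)) (g a) = pr p Z a := by
  unfold pr prE
  refine Finset.sum_congr rfl fun ω _ => ?_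
  simp [hg.eq_iff]

lemma pr_comp_zero [Fintype α] (Z : Ω → α) {g : α → β} {c : β}
    (hc : ∀ a, g a ≠ c) : pr p (fun ω => g (Z ω)) c = 0 := by
  unfold pr prE
  refine Finset.sum_eq_zero fun ω _ => ?_
  simp [hc]

lemma ent_comp_inj [Fintype α] [Fintype β] (Z : Ω → α) {g : α → β}
    (hg : Function.Injective g) :
    ent p (fun ω => g (Z ω)) = ent p Z := by
  unfold ent
  congr 1
  rw [← Finset.sum_subset (Finset.subset_univ (Finset.univ.image g))]
  · rw [Finset.sum_image (fun a _ b _ h => hg h)]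
    refine Finset.sum_congr rfl fun a _ => ?_
    rw [pr_comp_eq Z hg]
  · intro c _ hc
    have : ∀ a, g a ≠ c := by
      intro a h; exact hc (Finset.mem_image.2 ⟨a, Finset.mem_univ a, h⟩)
    rw [pr_comp_zero Z this]
    simp

lemma ent_pair_of_indep [Fintype α] [Fintype β] (hp : IsPMF p) (A : Ω → α) (B : Ω → β)
    (hfac : ∀ a b, pr p (fun ω => (A ω, B ω)) (a, b) = pr p A a * pr p B b) :
    ent p (fun ω => (A ω, B ω)) = ent p A + ent p B := by
  have hA : ∑ a, pr p A a = 1 := by rw [sum_pr]; exact hp.2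
  have hB : ∑ b, pr p B b = 1 := by rw [sum_pr]; exact hp.2
  have key : ∀ x y : ℝ, (x * y) * Real.logb 2 (x * y)
      = y * (x * Real.logb 2 x) + x * (y * Real.logb 2 y) := by
    intro x y
    rcases eq_or_ne x 0 with hx | hx
    · simp [hx]
    rcases eq_or_ne y 0 with hy | hy
    · simp [hy]
    rw [Real.logb, Real.log_mul hx hy]
    unfold Real.logb
    ring
  unfold ent
  rw [Fintype.sum_prod_type]
  have : ∀ a, ∑ b, pr p (fun ω => (A ω, B ω)) (a, b) *
      Real.logb 2 (pr p (fun ω => (A ω, B ω)) (a, b))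
      = pr p A a * Real.logb 2 (pr p A a) +
        pr p A a * ∑ b, pr p B b * Real.logb 2 (pr p B b) := by
    intro a
    rw [Finset.mul_sum]
    have : ∀ b, pr p (fun ω => (A ω, B ω)) (a, b) *
        Real.logb 2 (pr p (fun ω => (A ω, B ω)) (a, b))
        = pr p B b * (pr p A a * Real.logb 2 (pr p A a))
          + pr p A a * (pr p B b * Real.logb 2 (pr p B b)) := by
      intro b; rw [hfac a b, key]
    rw [Finset.sum_congr rfl fun b _ => this b, Finset.sum_add_distrib,
      ← Finset.sum_mul, hB, one_mul]
  rw [Finset.sum_congr rfl fun a _ => this a, Finset.sum_add_distrib,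
    ← Finset.sum_mul, hA]
  ring

lemma condEnt_eq_zero_of_det [Fintype β] [Fintype γ] (Z : Ω → γ) (Y : Ω → β)
    (f : γ → β) (hdet : ∀ ω, p ω ≠ 0 → Y ω = f (Z ω)) :
    condEnt p Y Z = 0 := by
  have hpr : ∀ z y, pr p (fun ω => (Z ω, Y ω)) (z, y)
      = if y = f z then pr p Z z else 0 := by
    intro z y
    split_ifs with h
    · subst h
      unfold pr prE
      refine Finset.sum_congr rfl fun ω _ => ?_
      by_cases hz : Z ω = z
      · by_cases hp0 : p ω = 0
        · simp [hp0]
        · have := hdet ω hp0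
          simp [Prod.ext_iff, hz, this]
      · simp [Prod.ext_iff, hz]
    · unfold pr prE
      refine Finset.sum_eq_zero fun ω _ => ?_
      by_cases hp0 : p ω = 0
      · simp [hp0]
      · have hY := hdet ω hp0
        have hne : ¬(Z ω = z ∧ Y ω = y) := by
          rintro ⟨h1, h2⟩
          exact h (by rw [← h2, hY, h1])
        simp [hne]
  unfold condEnt ent
  rw [Fintype.sum_prod_type]
  have : ∀ z, ∑ y, pr p (fun ω => (Z ω, Y ω)) (z, y) *
      Real.logb 2 (pr p (fun ω => (Z ω, Y ω)) (z, y))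
      = pr p Z z * Real.logb 2 (pr p Z z) := by
    intro z
    rw [Finset.sum_congr rfl fun y _ => by rw [hpr z y]]
    simp [apply_ite (fun t : ℝ => t * Real.logb 2 t)]
  rw [Finset.sum_congr rfl fun z _ => this z]
  ring

end Lemmas


namespace FRLsort

variable (B : Finset ℝ)

def bp (j : ℕ) : ℝ := (B.sort (· ≤ ·)).getD j 1

variable {B}

lemma len_sort : (B.sort (· ≤ ·)).length = B.card := Finset.length_sort _

lemma bp_mem {j : ℕ} (hj : j < B.card) : bp B j ∈ B := by
  unfold bp
  rw [List.getD_eq_getElem _ _ (by rw [len_sort]; exact hj)]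
  rw [← Finset.mem_sort (α := ℝ) (· ≤ ·)]
  exact List.getElem_mem _

lemma bp_rep {x : ℝ} (hx : x ∈ B) : ∃ j < B.card, bp B j = x := by
  rw [← Finset.mem_sort (α := ℝ) (· ≤ ·)] at hx
  obtain ⟨j, hj, hje⟩ := List.getElem_of_mem hx
  exact ⟨j, by rw [← len_sort]; exact hj,
    by unfold bp; rw [List.getD_eq_getElem _ _ hj]; exact hje⟩

lemma bp_top {j : ℕ} (hj : B.card ≤ j) : bp B j = 1 := by
  unfold bp
  exact List.getD_eq_default _ _ (by rw [len_sort]; exact hj)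

lemma bp_le_one (h1 : ∀ x ∈ B, x ≤ 1) (j : ℕ) : bp B j ≤ 1 := by
  by_cases hj : j < B.card
  · exact h1 _ (bp_mem hj)
  · rw [bp_top (le_of_not_gt hj)]

lemma bp_nonneg (h0 : ∀ x ∈ B, 0 ≤ x) (j : ℕ) : 0 ≤ bp B j := by
  by_cases hj : j < B.card
  · exact h0 _ (bp_mem hj)
  · rw [bp_top (le_of_not_gt hj)]; norm_num

lemma bp_mono (h1 : ∀ x ∈ B, x ≤ 1) : Monotone (bp B) := by
  intro i j hij
  by_cases hj : j < B.card
  · have hi : i < B.card := lt_of_le_of_lt hij hj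
    unfold bp
    rw [List.getD_eq_getElem _ _ (by rw [len_sort]; exact hi),
      List.getD_eq_getElem _ _ (by rw [len_sort]; exact hj)]
    exact List.Pairwise.rel_get_of_le (Finset.pairwise_sort B (· ≤ ·))
      (by exact_mod_cast hij)
  · rw [bp_top (le_of_not_gt hj)]
    exact bp_le_one h1 i

lemma bp_zero (h0 : ∀ x ∈ B, 0 ≤ x) (hB0 : (0:ℝ) ∈ B) : bp B 0 = 0 := by
  obtain ⟨j, hj, hje⟩ := bp_rep hB0
  have h0m : 0 < B.card := lt_of_le_of_lt (Nat.zero_le j) hj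
  have := h0 _ (bp_mem h0m)
  have h2 : bp B 0 ≤ bp B j := by
    unfold bp
    rw [List.getD_eq_getElem _ _ (by rw [len_sort]; exact h0m),
      List.getD_eq_getElem _ _ (by rw [len_sort]; exact hj)]
    exact List.Pairwise.rel_get_of_le (Finset.pairwise_sort B (· ≤ ·))
      (by exact_mod_cast Nat.zero_le j)
  rw [hje] at h2
  linarith

lemma bp_step (h1 : ∀ x ∈ B, x ≤ 1) {x : ℝ} (hx : x ∈ B) {j : ℕ}
    (h : bp B j < x) : bp B (j + 1) ≤ x := by
  obtain ⟨j0, _, hje⟩ := bp_rep hx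
  subst hje
  have : j + 1 ≤ j0 := by
    by_contra hc
    exact absurd (bp_mono h1 (by omega : j0 ≤ j)) (not_le.2 h)
  exact bp_mono h1 this

lemma bp_telescope (h0 : ∀ x ∈ B, 0 ≤ x) (h1 : ∀ x ∈ B, x ≤ 1) (hB0 : (0:ℝ) ∈ B)
    {r t : ℝ} (hr : r ∈ B) (ht : t ∈ B ∨ t = 1) (hrt : r ≤ t) :
    ∑ j ∈ Finset.range B.card,
      (if r ≤ bp B j ∧ bp B j < t then bp B (j+1) - bp B j else 0) = t - r := by
  set b := bp B with hb
  have ht1 : t ≤ 1 := by rcases ht with h | h; exacts [h1 _ h, le_of_eq h]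
  have hr0 : 0 ≤ r := h0 _ hr
  have key : ∀ j, (if r ≤ b j ∧ b j < t then b (j+1) - b j else 0)
      = max r (min t (b (j+1))) - max r (min t (b j)) := by
    intro j
    have hmono := bp_mono h1 (Nat.le_succ j)
    by_cases hjr : b j < r
    · have h2 : b (j+1) ≤ r := bp_step h1 hr hjr
      rw [if_neg (by rintro ⟨hc, -⟩; linarith)]
      rw [min_eq_right (le_trans (le_of_lt hjr) hrt), max_eq_left (le_of_lt hjr),
        min_eq_right (le_trans h2 hrt), max_eq_left h2]
      ring
    · push_neg at hjr
      by_cases hjt : b j < t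
      · have h2 : b (j+1) ≤ t := by
          rcases ht with hh | hh
          · exact bp_step h1 hh hjt
          · rw [hh]; exact bp_le_one h1 _
        rw [if_pos ⟨hjr, hjt⟩]
        rw [min_eq_right (le_of_lt hjt), max_eq_right hjr,
          min_eq_right h2, max_eq_right (le_trans hjr hmono)]
      · push_neg at hjt
        rw [if_neg (by rintro ⟨-, hc⟩; linarith)]
        rw [min_eq_left hjt, min_eq_left (le_trans hjt hmono)]
        ring
  rw [Finset.sum_congr rfl fun j _ => key j,
    Finset.sum_range_sub (fun j => max r (min t (b j)))]
  rw [hb, bp_top (le_refl B.card), bp_zero h0 hB0]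
  rw [min_eq_left ht1, max_eq_right hrt, min_eq_right (by linarith : (0:ℝ) ≤ t),
    max_eq_left hr0]

end FRLsort


namespace FRLcore

variable {αX αY T : Type*} [Fintype αX] [Fintype αY] [Fintype T]
variable (q : αX × αY × T → ℝ) (eY : αY ≃ Fin (Fintype.card αY))

def sM (x : αX) (u : T) : ℝ := ∑ y, q (x, y, u)

def Fc (x : αX) (u : T) (t : ℕ) : ℝ :=
  (∑ y ∈ Finset.univ.filter fun y => ((eY y : ℕ) < t), q (x, y, u)) / sM q x u

def Bset : Finset ℝ :=
  insert 0 ((Finset.univ (α := αX × T × Fin (Fintype.card αY - 1))).image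
    fun z => Fc q eY z.1 z.2.1 ((z.2.2 : ℕ) + 1))

def mCard : ℕ := (Bset q eY).card

def bb (j : ℕ) : ℝ := FRLsort.bp (Bset q eY) j

def lenI (j : ℕ) : ℝ := bb q eY (j + 1) - bb q eY j

def assigned (x : αX) (u : T) (y : αY) (j : ℕ) : Prop :=
  Fc q eY x u (eY y) ≤ bb q eY j ∧ bb q eY j < Fc q eY x u ((eY y : ℕ) + 1)

def Pd (ω : (αX × αY × T) × Fin (mCard q eY)) : ℝ :=
  sM q ω.1.1 ω.1.2.2 * lenI q eY ω.2 *
    (if assigned q eY ω.1.1 ω.1.2.2 ω.1.2.1 ω.2 then 1 else 0)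

variable {q eY}
variable (hq0 : ∀ c, 0 ≤ q c)

section basic
include hq0

lemma sM_nonneg (x : αX) (u : T) : 0 ≤ sM q x u :=
  Finset.sum_nonneg fun y _ => hq0 _

lemma q_le_sM (x : αX) (y : αY) (u : T) : q (x, y, u) ≤ sM q x u := by
  refine Finset.single_le_sum (f := fun y => q (x, y, u)) (fun y _ => hq0 _)
    (Finset.mem_univ y)

lemma Fc_nonneg (x : αX) (u : T) (t : ℕ) : 0 ≤ Fc q eY x u t :=
  div_nonneg (Finset.sum_nonneg fun y _ => hq0 _) (sM_nonneg hq0 x u)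

lemma Fc_le_one (x : αX) (u : T) (t : ℕ) : Fc q eY x u t ≤ 1 := by
  unfold Fc
  rcases eq_or_lt_of_le (sM_nonneg hq0 x u) with hs | hs
  · rw [← hs]; simp
  · rw [div_le_one hs]
    exact Finset.sum_le_sum_of_subset_of_nonneg (Finset.filter_subset _ _)
      (fun y _ _ => hq0 _)

lemma Fc_mono (x : αX) (u : T) {t t' : ℕ} (h : t ≤ t') :
    Fc q eY x u t ≤ Fc q eY x u t' := by
  unfold Fc
  rcases eq_or_lt_of_le (sM_nonneg hq0 x u) with hs | hs
  · rw [← hs, div_zero, div_zero]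
  · refine (div_le_div_iff_of_pos_right hs).2 ?_
    refine Finset.sum_le_sum_of_subset_of_nonneg ?_ fun y _ _ => hq0 _
    intro y' hy'
    simp only [Finset.mem_filter, Finset.mem_univ, true_and] at hy' ⊢
    omega

end basic

lemma Fc_zero (x : αX) (u : T) : Fc q eY x u 0 = 0 := by
  unfold Fc
  rw [Finset.filter_false_of_mem (fun y _ => by omega), Finset.sum_empty, zero_div]

lemma Fc_top (x : αX) (u : T) (hs : sM q x u ≠ 0) :
    Fc q eY x u (Fintype.card αY) = 1 := by
  unfold Fc
  rw [Finset.filter_true_of_mem (fun y _ => (eY y).2)]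
  exact div_self hs

lemma Fc_succ_sub (x : αX) (y : αY) (u : T) :
    Fc q eY x u ((eY y : ℕ) + 1) = Fc q eY x u (eY y) + q (x, y, u) / sM q x u := by
  unfold Fc
  rw [← add_div]
  congr 1
  have hset : (Finset.univ.filter fun y' => ((eY y' : ℕ) < (eY y : ℕ) + 1))
      = insert y (Finset.univ.filter fun y' => ((eY y' : ℕ) < (eY y : ℕ))) := by
    ext y'
    simp only [Finset.mem_filter, Finset.mem_univ, true_and, Finset.mem_insert]
    constructor
    · intro hy'
      rcases Nat.lt_succ_iff_lt_or_eq.1 hy' with h | h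
      · exact Or.inr h
      · left
        exact eY.injective (Fin.ext h)
    · rintro (h | h)
      · subst h; omega
      · omega
  rw [hset, Finset.sum_insert (by simp)]
  ring


lemma zero_mem_Bset : (0:ℝ) ∈ Bset q eY := Finset.mem_insert_self _ _

section basic2
include hq0

lemma Bset_nonneg : ∀ v ∈ Bset q eY, 0 ≤ v := by
  intro v hv
  rcases Finset.mem_insert.1 hv with h | h
  · rw [h]
  · obtain ⟨z, -, hz⟩ := Finset.mem_image.1 h
    rw [← hz]; exact Fc_nonneg hq0 _ _ _

lemma Bset_le_one : ∀ v ∈ Bset q eY, v ≤ 1 := by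
  intro v hv
  rcases Finset.mem_insert.1 hv with h | h
  · rw [h]; norm_num
  · obtain ⟨z, -, hz⟩ := Finset.mem_image.1 h
    rw [← hz]; exact Fc_le_one hq0 _ _ _

lemma Fc_mem_Bset (x : αX) (u : T) {t : ℕ} (ht : t ≤ Fintype.card αY - 1) :
    Fc q eY x u t ∈ Bset q eY := by
  rcases Nat.eq_zero_or_pos t with h | h
  · rw [h, Fc_zero]; exact zero_mem_Bset
  · obtain ⟨t'', rfl⟩ : ∃ t'', t = t'' + 1 := ⟨t - 1, by omega⟩
    refine Finset.mem_insert.2 (Or.inr (Finset.mem_image.2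
      ⟨(x, u, ⟨t'', by omega⟩), Finset.mem_univ _, rfl⟩))

lemma lenI_nonneg (j : ℕ) : 0 ≤ lenI q eY j :=
  sub_nonneg.2 (FRLsort.bp_mono (Bset_le_one hq0) (Nat.le_succ j))

lemma assigned_unique {x : αX} {u : T} {y y' : αY} {j : ℕ}
    (h : assigned q eY x u y j) (h' : assigned q eY x u y' j) : y = y' := by
  by_contra hne
  have hne' : (eY y : ℕ) ≠ (eY y' : ℕ) := fun hc => hne (eY.injective (Fin.ext hc))
  rcases lt_or_gt_of_ne hne' with hlt | hlt
  · have := Fc_mono (q := q) (eY := eY) hq0 x u (show (eY y : ℕ) + 1 ≤ (eY y' : ℕ) by omega)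
    have h2 := h.2
    have h1 := h'.1
    linarith
  · have := Fc_mono (q := q) (eY := eY) hq0 x u (show (eY y' : ℕ) + 1 ≤ (eY y : ℕ) by omega)
    have h2 := h'.2
    have h1 := h.1
    linarith

lemma assigned_exists (x : αX) (u : T) (hs : sM q x u ≠ 0) {j : ℕ}
    (hlen : lenI q eY j ≠ 0) : ∃ y, assigned q eY x u y j := by
  have hney : Nonempty αY := by
    by_contra hn
    rw [not_nonempty_iff] at hn
    exact hs (by simp [sM])
  have h0 := Bset_nonneg (q := q) (eY := eY) hq0
  have h1 := Bset_le_one (q := q) (eY := eY) hq0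
  have hnY : 1 ≤ Fintype.card αY := Fintype.card_pos
  have hbj1 : bb q eY j < 1 := by
    have hmono := FRLsort.bp_mono h1 (Nat.le_succ j)
    have := FRLsort.bp_le_one h1 (j + 1)
    have hlen' : bb q eY j ≠ bb q eY (j+1) := fun hc => hlen (by unfold lenI; rw [← hc]; ring)
    unfold bb at *
    rcases lt_or_eq_of_le hmono with h | h
    · linarith
    · exact absurd h hlen'
  have hP0 : Fc q eY x u 0 ≤ bb q eY j := by
    rw [Fc_zero]; exact FRLsort.bp_nonneg h0 j
  obtain ⟨t, htle, hspec, hgreat⟩ : ∃ t, t ≤ Fintype.card αY - 1 ∧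
      Fc q eY x u t ≤ bb q eY j ∧
      (t + 1 ≤ Fintype.card αY - 1 → ¬ (Fc q eY x u (t + 1) ≤ bb q eY j)) := by
    refine ⟨Nat.findGreatest (fun t' => Fc q eY x u t' ≤ bb q eY j) (Fintype.card αY - 1),
      Nat.findGreatest_le _,
      Nat.findGreatest_spec (P := fun t' => Fc q eY x u t' ≤ bb q eY j) (Nat.zero_le _) hP0,
      fun hk => Nat.findGreatest_is_greatest (P := fun t' => Fc q eY x u t' ≤ bb q eY j)
        (n := Fintype.card αY - 1) (Nat.lt_succ_self _) hk⟩
  have htlt : t < Fintype.card αY := by omega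
  refine ⟨eY.symm ⟨t, htlt⟩, ?_, ?_⟩
  · rw [Equiv.apply_symm_apply]
    exact hspec
  · rw [Equiv.apply_symm_apply]
    show bb q eY j < Fc q eY x u (t + 1)
    rcases eq_or_lt_of_le htle with he | hlt
    · have : t + 1 = Fintype.card αY := by omega
      rw [this, Fc_top x u hs]
      exact hbj1
    · have := hgreat (by omega)
      push_neg at this
      exact this

lemma Pd_nonneg (ω : (αX × αY × T) × Fin (mCard q eY)) : 0 ≤ Pd q eY ω := by
  unfold Pd
  refine mul_nonneg (mul_nonneg (sM_nonneg hq0 _ _) (lenI_nonneg hq0 _)) ?_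
  split_ifs <;> norm_num

lemma interval_sum (x : αX) (y : αY) (u : T) (hs : sM q x u ≠ 0) :
    ∑ j ∈ Finset.range (mCard q eY), (if assigned q eY x u y j then lenI q eY j else 0)
      = q (x, y, u) / sM q x u := by
  have hnY : 1 ≤ Fintype.card αY := by
    have : Nonempty αY := ⟨y⟩
    exact Fintype.card_pos
  have hyc : (eY y : ℕ) < Fintype.card αY := (eY y).2
  have hr : Fc q eY x u (eY y) ∈ Bset q eY := Fc_mem_Bset hq0 x u (by omega)
  have ht : Fc q eY x u ((eY y : ℕ) + 1) ∈ Bset q eY ∨ Fc q eY x u ((eY y : ℕ) + 1) = 1 := by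
    by_cases hc : (eY y : ℕ) + 1 ≤ Fintype.card αY - 1
    · exact Or.inl (Fc_mem_Bset hq0 x u hc)
    · have : (eY y : ℕ) + 1 = Fintype.card αY := by omega
      rw [this]
      exact Or.inr (Fc_top x u hs)
  have key := FRLsort.bp_telescope (Bset_nonneg hq0) (Bset_le_one hq0) zero_mem_Bset
    hr ht (Fc_mono hq0 x u (Nat.le_succ _))
  have hconv : ∀ j : ℕ, (if assigned q eY x u y j then lenI q eY j else 0)
      = (if Fc q eY x u (eY y) ≤ FRLsort.bp (Bset q eY) j ∧
          FRLsort.bp (Bset q eY) j < Fc q eY x u ((eY y : ℕ) + 1) then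
        FRLsort.bp (Bset q eY) (j + 1) - FRLsort.bp (Bset q eY) j else 0) :=
    fun j => if_congr Iff.rfl rfl rfl
  rw [show mCard q eY = (Bset q eY).card from rfl,
    Finset.sum_congr rfl fun j _ => hconv j, key, Fc_succ_sub]
  ring

lemma marg_j (x : αX) (y : αY) (u : T) :
    ∑ j : Fin (mCard q eY), Pd q eY ((x, y, u), j) = q (x, y, u) := by
  have : ∀ j : Fin (mCard q eY), Pd q eY ((x, y, u), j)
      = sM q x u * (if assigned q eY x u y (j : ℕ) then lenI q eY (j : ℕ) else 0) := by
    intro j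
    unfold Pd
    split_ifs <;> ring
  rw [Finset.sum_congr rfl fun j _ => this j]
  by_cases hs : sM q x u = 0
  · have hq : q (x, y, u) = 0 :=
      le_antisymm (hs ▸ q_le_sM hq0 x y u) (hq0 _)
    simp [hs, hq]
  · rw [← Finset.mul_sum]
    rw [Fin.sum_univ_eq_sum_range (fun j => if assigned q eY x u y j then lenI q eY j else 0)]
    rw [interval_sum hq0 x y u hs]
    exact mul_div_cancel₀ _ hs

lemma marg_y (x : αX) (u : T) (j : Fin (mCard q eY)) :
    ∑ y, Pd q eY ((x, y, u), j) = sM q x u * lenI q eY j := by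
  by_cases hs : sM q x u = 0
  · rw [hs, zero_mul]
    refine Finset.sum_eq_zero fun y _ => ?_
    unfold Pd
    simp [hs]
  · by_cases hlen : lenI q eY (j : ℕ) = 0
    · rw [hlen, mul_zero]
      refine Finset.sum_eq_zero fun y _ => ?_
      unfold Pd
      simp [hlen]
    · obtain ⟨y0, hy0⟩ := assigned_exists hq0 x u hs hlen
      rw [Finset.sum_eq_single y0]
      · unfold Pd
        simp only [if_pos hy0]
        ring
      · intro y _ hy
        unfold Pd
        rw [if_neg fun hc => hy (assigned_unique hq0 hc hy0), mul_zero]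
      · intro h
        exact absurd (Finset.mem_univ y0) h

lemma sum_sM : ∑ x, ∑ u, sM q x u = ∑ c, q c := by
  rw [Fintype.sum_prod_type]
  refine Finset.sum_congr rfl fun x _ => ?_
  rw [Fintype.sum_prod_type]
  unfold sM
  rw [Finset.sum_comm]

lemma sum_Pd : ∑ ω, Pd q eY ω = ∑ c, q c := by
  rw [Fintype.sum_prod_type]
  refine Finset.sum_congr rfl fun c _ => ?_
  obtain ⟨x, y, u⟩ := c
  exact marg_j hq0 x y u

end basic2

lemma mCard_bound :
    mCard q eY ≤ Fintype.card αX * Fintype.card T * (Fintype.card αY - 1) + 1 := by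
  unfold mCard Bset
  refine le_trans (Finset.card_insert_le _ _) ?_
  have := Finset.card_image_le (s := (Finset.univ : Finset (αX × T × Fin (Fintype.card αY - 1))))
    (f := fun z => Fc q eY z.1 z.2.1 ((z.2.2 : ℕ) + 1))
  refine Nat.add_le_add_right (le_trans this ?_) 1
  simp [Fintype.card_prod, Fintype.card_fin, mul_assoc]

end FRLcore



section MoreLemmas
variable {Ω α β γ : Type*} [Fintype Ω] {p : Ω → ℝ}

lemma pr_nonneg (hp : ∀ ω, 0 ≤ p ω) (X : Ω → α) (a : α) : 0 ≤ pr p X a := by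
  unfold pr prE
  refine Finset.sum_nonneg fun ω _ => ?_
  split_ifs
  · exact hp ω
  · exact le_refl 0

lemma pr_comp_equiv {Ω' : Type*} [Fintype Ω'] (e : Ω ≃ Ω') (P : Ω' → ℝ)
    (Z : Ω' → α) (a : α) :
    pr (fun n => P (e n)) (fun n => Z (e n)) a = pr P Z a := by
  unfold pr prE
  exact Equiv.sum_comp e (fun ω => if Z ω = a then P ω else 0)

lemma iteEq {p q : Prop} {hp : Decidable p} {hq : Decidable q} {α : Sort*} {a b : α}
    (h : p ↔ q) : (@ite _ p hp a b) = @ite _ q hq a b := by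
  have hpq := propext h
  subst hpq
  rw [Subsingleton.elim hp hq]

lemma sum_swap3 {A B C : Type*} [Fintype A] [Fintype B] [Fintype C]
    (F : A → B → C → ℝ) :
    ∑ a, ∑ b, ∑ c, F a b c = ∑ c, ∑ a, ∑ b, F a b c := by
  calc ∑ a, ∑ b, ∑ c, F a b c
      = ∑ a, ∑ c, ∑ b, F a b c := Finset.sum_congr rfl fun a _ => Finset.sum_comm
    _ = ∑ c, ∑ a, ∑ b, F a b c := Finset.sum_comm

lemma pr_proj3_1 [Fintype β] [Fintype γ] (X : Ω → α) (Y : Ω → β) (Z : Ω → γ) (a : α) :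
    pr p X a = ∑ b, ∑ c, pr p (fun ω => (X ω, Y ω, Z ω)) (a, b, c) := by
  unfold pr prE
  refine Eq.trans ?_ (sum_swap3 (fun (b : β) (c : γ) (ω : Ω) =>
    @ite ℝ ((X ω, Y ω, Z ω) = (a, b, c)) (Classical.propDecidable _) (p ω) 0)).symm
  refine Finset.sum_congr rfl fun ω _ => ?_
  by_cases h : X ω = a
  · have h1 : ∀ b : β, (∑ c1 : γ, if Y ω = b ∧ Z ω = c1 then p ω else 0)
        = if Y ω = b then p ω else 0 := fun b => by
      by_cases hb : Y ω = b <;> simp [hb]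
    simp [Prod.ext_iff, h, h1]
  · simp [Prod.ext_iff, h]

lemma pr_proj3_3 [Fintype α] [Fintype β] (X : Ω → α) (Y : Ω → β) (Z : Ω → γ) (c : γ) :
    pr p Z c = ∑ a, ∑ b, pr p (fun ω => (X ω, Y ω, Z ω)) (a, b, c) := by
  unfold pr prE
  refine Eq.trans ?_ (sum_swap3 (fun (a : α) (b : β) (ω : Ω) =>
    @ite ℝ ((X ω, Y ω, Z ω) = (a, b, c)) (Classical.propDecidable _) (p ω) 0)).symm
  refine Finset.sum_congr rfl fun ω _ => ?_
  by_cases h : Z ω = c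
  · have h1 : ∀ a1 : α, (∑ b : β, if X ω = a1 ∧ Y ω = b then p ω else 0)
        = if X ω = a1 then p ω else 0 := fun a1 => by
      by_cases ha : X ω = a1 <;> simp [ha]
    simp [Prod.ext_iff, h, h1]
  · simp [Prod.ext_iff, h]

lemma pr_proj3_13 [Fintype β] (X : Ω → α) (Y : Ω → β) (Z : Ω → γ) (a : α) (c : γ) :
    pr p (fun ω => (X ω, Z ω)) (a, c) = ∑ b, pr p (fun ω => (X ω, Y ω, Z ω)) (a, b, c) := by
  unfold pr prE
  refine Eq.trans ?_ (Finset.sum_comm)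
  refine Finset.sum_congr rfl fun ω _ => ?_
  by_cases h : X ω = a <;> by_cases h2 : Z ω = c <;> simp [Prod.ext_iff, h, h2]

end MoreLemmas

namespace FRLcore

variable {αX αY T : Type*} [Fintype αX] [Fintype αY] [Fintype T]
variable {q : αX × αY × T → ℝ} {eY : αY ≃ Fin (Fintype.card αY)}
variable (hq0 : ∀ c, 0 ≤ q c) (hq1 : ∑ c, q c = 1)

include hq0 in
lemma prP_fst (c : αX × αY × T) : pr (Pd q eY) (fun ω => ω.1) c = q c := by
  unfold pr prE
  rw [Fintype.sum_prod_type]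
  trans (∑ c' : αX × αY × T, if c' = c then q c' else 0)
  · refine Finset.sum_congr rfl fun c' _ => ?_
    by_cases h : c' = c
    · subst h
      rw [if_pos rfl]
      refine Eq.trans (Finset.sum_congr rfl fun j' _ =>
        (if_pos rfl : _ = Pd q eY (c', j'))) ?_
      obtain ⟨x, y, u⟩ := c'
      exact marg_j hq0 x y u
    · rw [if_neg h]
      exact Finset.sum_eq_zero fun j' _ => if_neg (fun hc => h hc)
  · simp

include hq0 in
lemma prP_AXV (u : T) (x : αX) (j : Fin (mCard q eY)) :
    pr (Pd q eY) (fun ω => ((ω.1.2.2, ω.1.1), ω.2)) ((u, x), j)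
      = sM q x u * lenI q eY j := by
  unfold pr prE
  rw [Fintype.sum_prod_type]
  trans (∑ c' : αX × αY × T, if c'.1 = x ∧ c'.2.2 = u then Pd q eY (c', j) else 0)
  · refine Finset.sum_congr rfl fun c' _ => ?_
    by_cases h : c'.1 = x ∧ c'.2.2 = u
    · rw [if_pos h]
      refine Eq.trans (Finset.sum_congr rfl fun j' _ => iteEq ?_)
        (by simp : (∑ j' : Fin (mCard q eY), if j' = j then Pd q eY (c', j') else 0)
          = Pd q eY (c', j))
      constructor
      · intro hcc
        exact congrArg Prod.snd hcc
      · intro hj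
        show ((c'.2.2, c'.1), j') = ((u, x), j)
        rw [hj, h.1, h.2]
    · rw [if_neg h]
      refine Finset.sum_eq_zero fun j' _ => if_neg ?_
      intro hcc
      apply h
      have h1 : (((c'.2.2, c'.1), j') : (T × αX) × Fin (mCard q eY)).1.2 = x :=
        congrArg (fun z => z.1.2) hcc
      have h2 : (((c'.2.2, c'.1), j') : (T × αX) × Fin (mCard q eY)).1.1 = u :=
        congrArg (fun z => z.1.1) hcc
      exact ⟨h1, h2⟩
  · trans (∑ x' : αX, if x' = x then ∑ y : αY, Pd q eY ((x', y, u), j) else 0)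
    · rw [Fintype.sum_prod_type]
      refine Finset.sum_congr rfl fun x' _ => ?_
      trans (∑ y : αY, ∑ u' : T, if x' = x ∧ u' = u then Pd q eY ((x', y, u'), j) else 0)
      · exact Fintype.sum_prod_type (f := fun yu : αY × T =>
          if x' = x ∧ yu.2 = u then Pd q eY ((x', yu.1, yu.2), j) else 0)
      · by_cases h : x' = x
        · rw [if_pos h]
          refine Finset.sum_congr rfl fun y _ => ?_
          have h1 : ∀ u' : T, (if x' = x ∧ u' = u then Pd q eY ((x', y, u'), j) else 0)
              = if u' = u then Pd q eY ((x', y, u'), j) else 0 := fun u' => by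
            simp [h]
          simp [h1]
        · rw [if_neg h]
          exact Finset.sum_eq_zero fun y _ =>
            Finset.sum_eq_zero fun u' _ => if_neg (fun hc => h hc.1)
    · rw [Finset.sum_ite_eq' Finset.univ x (fun x' => ∑ y : αY, Pd q eY ((x', y, u), j)),
        if_pos (Finset.mem_univ x)]
      exact marg_y hq0 x u j

include hq0 hq1 in
lemma prP_V (j : Fin (mCard q eY)) :
    pr (Pd q eY) (fun ω => ω.2) j = lenI q eY j := by
  unfold pr prE
  rw [Fintype.sum_prod_type]
  trans (∑ c' : αX × αY × T, Pd q eY (c', j))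
  · refine Finset.sum_congr rfl fun c' _ => ?_
    trans (∑ j' : Fin (mCard q eY), if j' = j then Pd q eY (c', j') else 0)
    · exact Finset.sum_congr rfl fun j' _ => iteEq Iff.rfl
    · simp
  · calc ∑ c' : αX × αY × T, Pd q eY (c', j)
        = ∑ x, ∑ u, sM q x u * lenI q eY j := by
          rw [Fintype.sum_prod_type]
          refine Finset.sum_congr rfl fun x _ => ?_
          refine Eq.trans (Fintype.sum_prod_type
            (f := fun yu : αY × T => Pd q eY ((x, yu.1, yu.2), j))) ?_
          refine Eq.trans Finset.sum_comm ?_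
          exact Finset.sum_congr rfl fun u _ => marg_y hq0 x u j
      _ = (∑ x, ∑ u, sM q x u) * lenI q eY j := by
          rw [Finset.sum_mul]
          exact Finset.sum_congr rfl fun x _ => by rw [Finset.sum_mul]
      _ = lenI q eY j := by rw [sum_sM hq0, hq1, one_mul]

include hq0 hq1 in
lemma prP_AV (u : T) (j : Fin (mCard q eY)) :
    pr (Pd q eY) (fun ω => (ω.1.2.2, ω.2)) (u, j)
      = (∑ x, sM q x u) * lenI q eY j := by
  have h1 : pr (Pd q eY) (fun ω => (ω.1.2.2, ω.2)) (u, j)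
      = ∑ x, pr (Pd q eY) (fun ω => ((ω.1.2.2, ω.2), ω.1.1)) ((u, j), x) :=
    pr_fst _ _ _
  have hg : Function.Injective
      (fun z : (T × αX) × Fin (mCard q eY) => ((z.1.1, z.2), z.1.2)) := by
    intro a b h
    simp only [Prod.ext_iff] at h ⊢
    exact ⟨⟨h.1.1, h.2⟩, h.1.2⟩
  have h2 : ∀ x, pr (Pd q eY) (fun ω => ((ω.1.2.2, ω.2), ω.1.1)) ((u, j), x)
      = pr (Pd q eY) (fun ω : (αX × αY × T) × Fin (mCard q eY) =>
          ((ω.1.2.2, ω.1.1), ω.2)) ((u, x), j) := by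
    intro x
    exact pr_comp_eq (fun ω : (αX × αY × T) × Fin (mCard q eY) =>
      ((ω.1.2.2, ω.1.1), ω.2)) hg ((u, x), j)
  rw [h1]
  refine Eq.trans (Finset.sum_congr rfl fun x _ =>
    (h2 x).trans (prP_AXV hq0 u x j)) ?_
  rw [← Finset.sum_mul]

end FRLcore

/-- Extended FRL (Lemma 2): given I(X; U_1,…,U_k) = 0, on a possibly enlarged finite
probability space there exists U_{k+1} with I(U_1,…,U_{k+1}; X) = 0,
H(Y | U_1,…,U_{k+1}, X) = 0 and the stated alphabet bound,
preserving the joint distribution of (X, Y, U_1,…,U_k). -/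
theorem stmt6 {Ω αX αY : Type*} [Fintype Ω] [Fintype αX] [Fintype αY]
    {k : ℕ} (hk : 1 ≤ k) {υ : Fin k → Type*} [∀ i, Fintype (υ i)]
    (p : Ω → ℝ) (hp : IsPMF p) (X : Ω → αX) (Y : Ω → αY) (U : ∀ i, Ω → υ i)
    (hI : mi p X (fun ω => fun i => U i ω) = 0) :
    ∃ (N m : ℕ) (p' : Fin N → ℝ) (X' : Fin N → αX) (Y' : Fin N → αY)
      (U' : ∀ i, Fin N → υ i) (V : Fin N → Fin m),
      IsPMF p' ∧
      (∀ c : αX × αY × (∀ i, υ i),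
        pr p' (fun ω => (X' ω, Y' ω, fun i => U' i ω)) c
          = pr p (fun ω => (X ω, Y ω, fun i => U i ω)) c) ∧
      mi p' (fun ω => ((fun i => U' i ω), V ω)) X' = 0 ∧
      condEnt p' Y' (fun ω => ((fun i => U' i ω), V ω, X' ω)) = 0 ∧
      m ≤ Fintype.card αX * (∏ i, Fintype.card (υ i)) * (Fintype.card αY - 1) + 1 := by
  classical
  let Ufun : Ω → (∀ i, υ i) := fun ω => fun i => U i ω
  let W : Ω → αX × αY × (∀ i, υ i) := fun ω => (X ω, Y ω, Ufun ω)
  let q : αX × αY × (∀ i, υ i) → ℝ := fun c => pr p W c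
  have hq0 : ∀ c, 0 ≤ q c := fun c => pr_nonneg hp.1 W c
  have hq1 : ∑ c, q c = 1 := by
    show ∑ c, pr p W c = 1
    rw [sum_pr]
    exact hp.2
  let eY : αY ≃ Fin (Fintype.card αY) := Fintype.equivFin αY
  let m := FRLcore.mCard q eY
  let Ω' := (αX × αY × (∀ i, υ i)) × Fin m
  let e : Fin (Fintype.card Ω') ≃ Ω' := (Fintype.equivFin Ω').symm
  let P : Ω' → ℝ := FRLcore.Pd q eY
  have hPpmf : IsPMF P := ⟨fun ω => FRLcore.Pd_nonneg hq0 ω,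
    by rw [FRLcore.sum_Pd hq0]; exact hq1⟩
  let A : Ω' → (∀ i, υ i) := fun ω => ω.1.2.2
  let Vf : Ω' → Fin m := fun ω => ω.2
  let Xf : Ω' → αX := fun ω => ω.1.1
  let Yf : Ω' → αY := fun ω => ω.1.2.1
  refine ⟨Fintype.card Ω', m, fun n => P (e n), fun n => Xf (e n), fun n => Yf (e n),
    fun i n => (e n).1.2.2 i, fun n => Vf (e n), ?_, ?_, ?_, ?_, ?_⟩
  · -- IsPMF
    refine ⟨fun n => FRLcore.Pd_nonneg hq0 (e n), ?_⟩
    rw [Equiv.sum_comp e P]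
    exact hPpmf.2
  · -- preservation
    intro c
    exact (pr_comp_equiv e P (fun ω => ω.1) c).trans (FRLcore.prP_fst hq0 c)
  · -- mi = 0
    have hAV : ent (fun n => P (e n)) (fun n => (A (e n), Vf (e n)))
        = ent P (fun ω => (A ω, Vf ω)) :=
      ent_congr fun c => pr_comp_equiv e P (fun ω => (A ω, Vf ω)) c
    have hXe : ent (fun n => P (e n)) (fun n => Xf (e n)) = ent P Xf :=
      ent_congr fun c => pr_comp_equiv e P Xf c
    have hAVX : ent (fun n => P (e n)) (fun n => ((A (e n), Vf (e n)), Xf (e n)))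
        = ent P (fun ω => ((A ω, Vf ω), Xf ω)) :=
      ent_congr fun c => pr_comp_equiv e P (fun ω => ((A ω, Vf ω), Xf ω)) c
    have hPrA : ∀ u, pr P A u = ∑ x, FRLcore.sM q x u := by
      intro u
      calc pr P A u = ∑ x, ∑ y, pr P (fun ω => (Xf ω, Yf ω, A ω)) (x, y, u) :=
            pr_proj3_3 Xf Yf A u
        _ = ∑ x, FRLcore.sM q x u :=
            Finset.sum_congr rfl fun x _ => Finset.sum_congr rfl fun y _ =>
              FRLcore.prP_fst hq0 (x, y, u)
    have hfac1 : ∀ (u : ∀ i, υ i) (v : Fin m),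
        pr P (fun ω => (A ω, Vf ω)) (u, v) = pr P A u * pr P Vf v := by
      intro u v
      have e1 : pr P (fun ω => (A ω, Vf ω)) (u, v)
          = (∑ x, FRLcore.sM q x u) * FRLcore.lenI q eY v :=
        FRLcore.prP_AV hq0 hq1 u v
      have e2 : pr P Vf v = FRLcore.lenI q eY v := FRLcore.prP_V hq0 hq1 v
      rw [e1, e2, hPrA u]
    have efac1 : ent P (fun ω => (A ω, Vf ω)) = ent P A + ent P Vf :=
      ent_pair_of_indep hPpmf A Vf hfac1
    have hg : Function.Injective
        (fun z : ((∀ i, υ i) × αX) × Fin m => ((z.1.1, z.2), z.1.2)) := by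
      intro a b h
      simp only [Prod.ext_iff] at h ⊢
      exact ⟨⟨h.1.1, h.2⟩, h.1.2⟩
    have erel : ent P (fun ω => ((A ω, Vf ω), Xf ω))
        = ent P (fun ω => ((A ω, Xf ω), Vf ω)) :=
      ent_comp_inj (fun ω => ((A ω, Xf ω), Vf ω)) hg
    have hPrAX : ∀ (u : ∀ i, υ i) (x : αX),
        pr P (fun ω => (A ω, Xf ω)) (u, x) = FRLcore.sM q x u := by
      intro u x
      calc pr P (fun ω => (A ω, Xf ω)) (u, x)
          = pr P (fun ω => (Xf ω, A ω)) (x, u) :=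
            pr_comp_eq (fun ω => (Xf ω, A ω)) Prod.swap_injective (x, u)
        _ = ∑ y, pr P (fun ω => (Xf ω, Yf ω, A ω)) (x, y, u) :=
            pr_proj3_13 Xf Yf A x u
        _ = FRLcore.sM q x u :=
            Finset.sum_congr rfl fun y _ => FRLcore.prP_fst hq0 (x, y, u)
    have hfac2 : ∀ (ax : (∀ i, υ i) × αX) (v : Fin m),
        pr P (fun ω => ((A ω, Xf ω), Vf ω)) (ax, v)
          = pr P (fun ω => (A ω, Xf ω)) ax * pr P Vf v := by
      intro ax v
      obtain ⟨u, x⟩ := ax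
      have e1 : pr P (fun ω => ((A ω, Xf ω), Vf ω)) ((u, x), v)
          = FRLcore.sM q x u * FRLcore.lenI q eY v := FRLcore.prP_AXV hq0 u x v
      have e2 : pr P Vf v = FRLcore.lenI q eY v := FRLcore.prP_V hq0 hq1 v
      rw [e1, e2, hPrAX u x]
    have efac2 : ent P (fun ω => ((A ω, Xf ω), Vf ω))
        = ent P (fun ω => (A ω, Xf ω)) + ent P Vf :=
      ent_pair_of_indep hPpmf (fun ω => (A ω, Xf ω)) Vf hfac2
    have eswap : ent P (fun ω => (A ω, Xf ω)) = ent P (fun ω => (Xf ω, A ω)) :=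
      ent_comp_inj (fun ω => (Xf ω, A ω)) Prod.swap_injective
    -- transport to original space
    have hA_orig : ent P A = ent p Ufun := by
      refine ent_congr fun u => ?_
      rw [hPrA u]
      refine Eq.symm ?_
      calc pr p Ufun u = ∑ x, ∑ y, pr p (fun ω => (X ω, Y ω, Ufun ω)) (x, y, u) :=
            pr_proj3_3 X Y Ufun u
        _ = ∑ x, FRLcore.sM q x u :=
            Finset.sum_congr rfl fun x _ => Finset.sum_congr rfl fun y _ => rfl
    have hX_orig : ent P Xf = ent p X := by
      refine ent_congr fun x => ?_
      calc pr P Xf x = ∑ y, ∑ u, pr P (fun ω => (Xf ω, Yf ω, A ω)) (x, y, u) :=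
            pr_proj3_1 Xf Yf A x
        _ = ∑ y, ∑ u, q (x, y, u) :=
            Finset.sum_congr rfl fun y _ => Finset.sum_congr rfl fun u _ =>
              FRLcore.prP_fst hq0 (x, y, u)
        _ = ∑ y, ∑ u, pr p (fun ω => (X ω, Y ω, Ufun ω)) (x, y, u) :=
            Finset.sum_congr rfl fun y _ => Finset.sum_congr rfl fun u _ => rfl
        _ = pr p X x := (pr_proj3_1 X Y Ufun x).symm
    have hXA_orig : ent P (fun ω => (Xf ω, A ω)) = ent p (fun ω => (X ω, Ufun ω)) := by
      refine ent_congr fun c => ?_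
      obtain ⟨x, u⟩ := c
      calc pr P (fun ω => (Xf ω, A ω)) (x, u)
          = ∑ y, pr P (fun ω => (Xf ω, Yf ω, A ω)) (x, y, u) := pr_proj3_13 Xf Yf A x u
        _ = ∑ y, q (x, y, u) :=
            Finset.sum_congr rfl fun y _ => FRLcore.prP_fst hq0 (x, y, u)
        _ = ∑ y, pr p (fun ω => (X ω, Y ω, Ufun ω)) (x, y, u) :=
            Finset.sum_congr rfl fun y _ => rfl
        _ = pr p (fun ω => (X ω, Ufun ω)) (x, u) := (pr_proj3_13 X Y Ufun x u).symm
    have hI' : ent p X + ent p Ufun - ent p (fun ω => (X ω, Ufun ω)) = 0 := hI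
    show ent (fun n => P (e n)) (fun n => (A (e n), Vf (e n)))
        + ent (fun n => P (e n)) (fun n => Xf (e n))
        - ent (fun n => P (e n)) (fun n => ((A (e n), Vf (e n)), Xf (e n))) = 0
    rw [hAV, hXe, hAVX, efac1, erel, efac2, eswap, hA_orig, hX_orig, hXA_orig]
    linarith [hI']
  · -- condEnt = 0
    have hΩne : Nonempty Ω := by
      by_contra h
      rw [not_nonempty_iff] at h
      have h2 := hp.2
      rw [Finset.univ_eq_empty, Finset.sum_empty] at h2
      exact absurd h2 (by norm_num)
    have hYne : Nonempty αY := ⟨Y (Classical.arbitrary Ω)⟩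
    let f : (∀ i, υ i) × Fin m × αX → αY := fun z =>
      if h : ∃ y, FRLcore.assigned q eY z.2.2 z.1 y (z.2.1 : ℕ) then h.choose
      else Classical.arbitrary αY
    have key : ∀ ω : Ω', P ω ≠ 0 → ω.1.2.1 = f (ω.1.2.2, ω.2, ω.1.1) := by
      rintro ⟨⟨x, y, u⟩, j⟩ hω
      have hassigned : FRLcore.assigned q eY x u y (j : ℕ) := by
        by_contra hca
        apply hω
        show FRLcore.sM q x u * FRLcore.lenI q eY (j : ℕ) *
          (if FRLcore.assigned q eY x u y (j : ℕ) then (1:ℝ) else 0) = 0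
        rw [if_neg hca, mul_zero]
      have hex : ∃ y', FRLcore.assigned q eY x u y' (j : ℕ) := ⟨y, hassigned⟩
      show y = f (u, j, x)
      have hf : f (u, j, x) = hex.choose := by
        show (if h : ∃ y', FRLcore.assigned q eY x u y' (j : ℕ) then h.choose
          else Classical.arbitrary αY) = hex.choose
        rw [dif_pos hex]
      rw [hf]
      exact FRLcore.assigned_unique hq0 hassigned hex.choose_spec
    exact condEnt_eq_zero_of_det _ _ f (fun n hn => key (e n) hn)
  · -- cardinality bound
    have hb := FRLcore.mCard_bound (q := q) (eY := eY)
    simpa [Fintype.card_pi] using hb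
end
end
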